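/- For each fixed z ∈ (0,1) ∪ (1,∞), the q-logarithm r ↦ ln_r z = (z^(1-r) - 1)/(1-r) (with value ln z at r = 1) is strictly decreasing in r ∈ ℝ. -/

import Mathlib

/-- The `q`-logarithm (Tsallis logarithm): `ln_q x = (x^(1-q) - 1)/(1-q)` for `q ≠ 1`,
and `ln_1 x = ln x`. -/
noncomputable def qlog (q x : ℝ) : ℝ :=
  if q = 1 then Real.log x else (x ^ (1 - q) - 1) / (1 - q)

private noncomputable def hfun (u : ℝ) : ℝ := if u = 0 then 1 else (Real.exp u - 1) / u

private lemma hfun_strictMono : StrictMono hfun := by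
  intro u v huv
  rcases eq_or_ne u 0 with hu | hu
  · subst hu
    have hv : v ≠ 0 := ne_of_gt huv
    have := Real.add_one_lt_exp hv
    rw [hfun, hfun, if_pos rfl, if_neg hv, lt_div_iff₀ huv]
    linarith
  · rcases eq_or_ne v 0 with hv | hv
    · subst hv
      have := Real.add_one_lt_exp hu
      have hun : u < 0 := huv
      rw [hfun, hfun, if_pos rfl, if_neg hu, div_lt_iff_of_neg hun]
      linarith
    · have := strictConvexOn_exp.secant_strict_mono (a := 0) (x := u) (y := v)
        (Set.mem_univ 0) (Set.mem_univ u) (Set.mem_univ v) hu hv huv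
      simpa [hfun, hu, hv, Real.exp_zero] using this

private lemma qlog_eq (z : ℝ) (hz0 : 0 < z) (r : ℝ) :
    qlog r z = Real.log z * hfun (Real.log z * (1 - r)) := by
  rcases eq_or_ne r 1 with hr | hr
  · simp [qlog, hr, hfun]
  · have h1r : (1 : ℝ) - r ≠ 0 := sub_ne_zero.mpr (Ne.symm hr)
    rcases eq_or_ne (Real.log z) 0 with hl | hl
    · have hz1 : z = 1 := by
        have := Real.log_eq_zero.mp hl
        rcases this with h | h | h
        · exact absurd h (ne_of_gt hz0)
        · exact h
        · linarith
      simp [qlog, hr, hz1, hl]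
    · have hml : Real.log z * (1 - r) ≠ 0 := mul_ne_zero hl h1r
      simp only [qlog, if_neg hr, hfun, if_neg hml]
      rw [← Real.exp_log hz0, ← Real.exp_mul]
      rw [Real.log_exp]
      field_simp

theorem stmt_9 (z : ℝ) (hz0 : 0 < z) (hz1 : z ≠ 1) :
    StrictAnti (fun r : ℝ => qlog r z) := by
  intro r1 r2 h12
  simp only [qlog_eq z hz0]
  have hl : Real.log z ≠ 0 := Real.log_ne_zero_of_pos_of_ne_one hz0 hz1
  rcases hl.lt_or_gt with hneg | hpos
  · have : Real.log z * (1 - r1) < Real.log z * (1 - r2) := by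
      apply mul_lt_mul_of_neg_left _ hneg
      linarith
    have := hfun_strictMono this
    exact mul_lt_mul_of_neg_left this hneg
  · have : Real.log z * (1 - r2) < Real.log z * (1 - r1) := by
      apply mul_lt_mul_of_pos_left _ hpos
      linarith
    have := hfun_strictMono this
    exact mul_lt_mul_of_pos_left this hpos
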